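/- Let Y be a nonempty finite type, G_a, G_b : Y → ℝ, and M ≥ 0 with |G_b(y)| ≤ M for all y ∈ Y. Suppose there is ε > 0 such that for all y1, y2 ∈ Y, if G_a(y1) > G_a(y2) then G_a(y1) − G_a(y2) ≥ ε, and suppose λ > 0 satisfies λ·ε > 2M. Define u(y) = λ·G_a(y) + G_b(y), let τ > 0, let π_ref : Y → ℝ be constant and strictly positive, and define the Bradley–Terry policy π*(y) = π_ref(y)·exp(u(y)/τ) / Σ_{y' ∈ Y} π_ref(y')·exp(u(y')/τ). Then for all y1, y2 ∈ Y: if G_a(y1) > G_a(y2), or G_a(y1) = G_a(y2) and G_b(y1) > G_b(y2), then π*(y1) > π*(y2). That is, the optimal Bradley–Terry policy strictly prefers lexicographically dominant responses. -/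
import Mathlib


theorem stmt_9 {Y : Type*} [Fintype Y] [Nonempty Y]
    (Ga Gb : Y → ℝ) (M : ℝ) (hM : 0 ≤ M) (hGb : ∀ y, |Gb y| ≤ M)
    (ε : ℝ) (hε : 0 < ε)
    (hgap : ∀ y1 y2, Ga y1 > Ga y2 → Ga y1 - Ga y2 ≥ ε)
    (lam : ℝ) (hlam : 0 < lam) (hlamε : lam * ε > 2 * M)
    (u : Y → ℝ) (hu : ∀ y, u y = lam * Ga y + Gb y)
    (τ : ℝ) (hτ : 0 < τ)
    (πref : Y → ℝ) (hπref : ∀ y, 0 < πref y)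
    (hconst : ∀ y1 y2, πref y1 = πref y2)
    (πstar : Y → ℝ)
    (hπstar : ∀ y, πstar y =
      πref y * Real.exp (u y / τ) / ∑ y', πref y' * Real.exp (u y' / τ)) :
    ∀ y1 y2 : Y,
      (Ga y1 > Ga y2 ∨ (Ga y1 = Ga y2 ∧ Gb y1 > Gb y2)) →
        πstar y1 > πstar y2 := by
  intro y1 y2 hlex
  have hu12 : u y2 < u y1 := by
    rw [hu, hu]
    rcases hlex with h | ⟨h1, h2⟩
    · have hgap' := hgap y1 y2 h
      have hb1 := abs_le.mp (hGb y1)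
      have hb2 := abs_le.mp (hGb y2)
      nlinarith
    · rw [h1]; linarith
  have hS : 0 < ∑ y', πref y' * Real.exp (u y' / τ) :=
    Finset.sum_pos (fun y _ => mul_pos (hπref y) (Real.exp_pos _)) Finset.univ_nonempty
  rw [hπstar, hπstar, hconst y1 y2]
  have hexp : Real.exp (u y2 / τ) < Real.exp (u y1 / τ) :=
    Real.exp_lt_exp.mpr (by gcongr)
  have h2 := hπref y2
  gcongr
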